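/- Let D be a digraph obtained from a tournament T on k ≥ 4 vertices by adding, for each arc xy of T, a disjoint copy G^{xy} of a fixed (k−1)-dicritical oriented graph G, together with all arcs from y to V(G^{xy}) and all arcs from V(G^{xy}) to x. Then D is k-dicritical. -/

import Mathlib

/-- A (finite) digraph on vertices drawn from `ℕ`. -/
structure Dgr where
  verts : Finset ℕ
  Adj : ℕ → ℕ → Prop
  adj_mem : ∀ ⦃u v : ℕ⦄, Adj u v → u ∈ verts ∧ v ∈ verts
  adj_irrefl : ∀ v, ¬ Adj v v

namespace Dgr

/-- number of vertices -/
def nV (D : Dgr) : ℕ := D.verts.card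

/-- number of arcs -/
noncomputable def nA (D : Dgr) : ℕ := {p : ℕ × ℕ | D.Adj p.1 p.2}.ncard

/-- subdigraph relation -/
def Subd (H D : Dgr) : Prop := H.verts ⊆ D.verts ∧ ∀ ⦃u v : ℕ⦄, H.Adj u v → D.Adj u v

def ProperSubd (H D : Dgr) : Prop := Subd H D ∧ ¬ Subd D H

/-- a relation is acyclic: no directed cycle through any vertex -/
def Acy (R : ℕ → ℕ → Prop) : Prop := ∀ v, ¬ Relation.TransGen R v v

/-- a `k`-dicolouring: each colour class induces an acyclic subdigraph -/
def IsDicol (D : Dgr) {k : ℕ} (φ : ℕ → Fin k) : Prop :=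
  Acy (fun u v => D.Adj u v ∧ φ u = φ v)

def Dicolourable (D : Dgr) (k : ℕ) : Prop := ∃ φ : ℕ → Fin k, D.IsDicol φ

/-- the dichromatic number -/
noncomputable def dichr (D : Dgr) : ℕ := sInf {k | D.Dicolourable k}

/-- `k`-dicritical digraphs -/
def Dicritical (k : ℕ) (D : Dgr) : Prop :=
  D.dichr = k ∧ ∀ H : Dgr, ProperSubd H D → H.dichr < k

def Bidirected (D : Dgr) : Prop := ∀ ⦃u v : ℕ⦄, D.Adj u v → D.Adj v u

def Oriented (D : Dgr) : Prop := ∀ ⦃u v : ℕ⦄, D.Adj u v → ¬ D.Adj v u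

/-- being a bidirected complete digraph on `n` vertices -/
def IsBidirComplete (n : ℕ) (D : Dgr) : Prop :=
  D.verts.card = n ∧ ∀ u ∈ D.verts, ∀ v ∈ D.verts, u ≠ v → D.Adj u v

/-- a packing of digons (2-sets) and bidirected triangles (3-sets) -/
def IsPacking (D : Dgr) (P : Finset (Finset ℕ)) : Prop :=
  (∀ s ∈ P, (s.card = 2 ∨ s.card = 3) ∧ s ⊆ D.verts ∧
      ∀ u ∈ s, ∀ v ∈ s, u ≠ v → D.Adj u v) ∧
  (P : Set (Finset ℕ)).Pairwise Disjoint

/-- `T(D)`: the maximum of `d + 2t` over packings of `d` digons and `t` bidirected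
triangles; a digon contributes `card - 1 = 1`, a triangle `card - 1 = 2`. -/
noncomputable def TT (D : Dgr) : ℕ :=
  sSup {t | ∃ P : Finset (Finset ℕ), D.IsPacking P ∧ t = ∑ s ∈ P, (s.card - 1)}

/-- vertex deletion -/
def del (D : Dgr) (x : ℕ) : Dgr where
  verts := D.verts.erase x
  Adj u v := D.Adj u v ∧ u ≠ x ∧ v ≠ x
  adj_mem := by
    intro u v h
    exact ⟨Finset.mem_erase.2 ⟨h.2.1, (D.adj_mem h.1).1⟩,
           Finset.mem_erase.2 ⟨h.2.2, (D.adj_mem h.1).2⟩⟩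
  adj_irrefl := fun v h => D.adj_irrefl v h.1

/-- induced subdigraph on a set `S` of vertices -/
def induce (D : Dgr) (S : Finset ℕ) : Dgr where
  verts := D.verts ∩ S
  Adj u v := D.Adj u v ∧ u ∈ S ∧ v ∈ S
  adj_mem := by
    intro u v h
    exact ⟨Finset.mem_inter.2 ⟨(D.adj_mem h.1).1, h.2.1⟩,
           Finset.mem_inter.2 ⟨(D.adj_mem h.1).2, h.2.2⟩⟩
  adj_irrefl := fun v h => D.adj_irrefl v h.1

/-- adding a digon between two (distinct, existing) vertices -/
def addDigon (D : Dgr) (x y : ℕ) : Dgr where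
  verts := D.verts
  Adj u v := D.Adj u v ∨
    (x ≠ y ∧ x ∈ D.verts ∧ y ∈ D.verts ∧ ((u = x ∧ v = y) ∨ (u = y ∧ v = x)))
  adj_mem := by
    intro u v h
    rcases h with h | ⟨_, hx, hy, h | h⟩
    · exact D.adj_mem h
    · exact ⟨h.1 ▸ hx, h.2 ▸ hy⟩
    · exact ⟨h.1 ▸ hy, h.2 ▸ hx⟩
  adj_irrefl := by
    intro v h
    rcases h with h | ⟨hxy, _, _, h | h⟩
    · exact D.adj_irrefl v h
    · exact hxy (h.1.symm.trans h.2)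
    · exact hxy (h.2.symm.trans h.1)

/-- removing the digon `[x,y]` (both arcs) -/
def delDigon (D : Dgr) (x y : ℕ) : Dgr where
  verts := D.verts
  Adj u v := D.Adj u v ∧ ¬(u = x ∧ v = y) ∧ ¬(u = y ∧ v = x)
  adj_mem := by intro u v h; exact D.adj_mem h.1
  adj_irrefl := fun v h => D.adj_irrefl v h.1

/-- `D` is an Ore-composition of `D1` (digon side, replaced digon `[x,y]`) and
`D2` (split side, split vertex `z`). -/
def IsOreComp (D1 D2 D : Dgr) : Prop :=
  Bidirected D1 ∧ Bidirected D2 ∧ Disjoint D1.verts D2.verts ∧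
  ∃ (x y z : ℕ) (Z1 Z2 : Set ℕ),
    x ∈ D1.verts ∧ y ∈ D1.verts ∧ x ≠ y ∧ D1.Adj x y ∧
    z ∈ D2.verts ∧
    Z1 ∪ Z2 = {w | D2.Adj z w} ∧ Disjoint Z1 Z2 ∧ Z1.Nonempty ∧ Z2.Nonempty ∧
    D.verts = D1.verts ∪ D2.verts.erase z ∧
    (∀ u v, D.Adj u v ↔
      (D1.Adj u v ∧ ¬(u = x ∧ v = y) ∧ ¬(u = y ∧ v = x)) ∨
      (D2.Adj u v ∧ u ≠ z ∧ v ≠ z) ∨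
      (u = x ∧ v ∈ Z1 ∧ D2.Adj z v) ∨ (v = x ∧ u ∈ Z1 ∧ D2.Adj u z) ∨
      (u = y ∧ v ∈ Z2 ∧ D2.Adj z v) ∨ (v = y ∧ u ∈ Z2 ∧ D2.Adj u z))

/-- degree of a vertex: in-degree plus out-degree -/
noncomputable def deg (D : Dgr) (v : ℕ) : ℕ :=
  {u | D.Adj v u}.ncard + {u | D.Adj u v}.ncard

end Dgr

open Dgr

/-- the class of 4-Ore digraphs -/
inductive IsOre4 : Dgr → Prop
  | k4 : ∀ D : Dgr, IsBidirComplete 4 D → IsOre4 D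
  | comp : ∀ D1 D2 D : Dgr, IsOre4 D1 → IsOre4 D2 → IsOreComp D1 D2 D → IsOre4 D

namespace Dgr

/-- an emerald: a bidirected triangle all of whose vertices have degree 6 in `D` -/
def IsEmerald (D : Dgr) (s : Finset ℕ) : Prop :=
  s.card = 3 ∧ s ⊆ D.verts ∧ (∀ u ∈ s, ∀ v ∈ s, u ≠ v → D.Adj u v) ∧
  ∀ v ∈ s, D.deg v = 6

/-- a diamond: a bidirected `K4` minus a digon `[x,y]`, the two other vertices
having degree 6 in `D` -/
def IsDiamond (D : Dgr) (s : Finset ℕ) : Prop :=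
  s.card = 4 ∧ s ⊆ D.verts ∧ ∃ x ∈ s, ∃ y ∈ s, x ≠ y ∧
    (∀ u ∈ s, ∀ v ∈ s, u ≠ v → ¬(u = x ∧ v = y) → ¬(u = y ∧ v = x) → D.Adj u v) ∧
    (∀ v ∈ s, v ≠ x → v ≠ y → D.deg v = 6)

/-- boundary of an induced subdigraph given by its vertex set `S` -/
def bdry (D : Dgr) (S : Finset ℕ) : Set ℕ :=
  {v | v ∈ S ∧ ∃ u ∈ D.verts, u ∉ S ∧ (D.Adj u v ∨ D.Adj v u)}

/-- Ore-collapsible induced subdigraph, given by its vertex set -/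
def OreCollapsible (D : Dgr) (S : Finset ℕ) : Prop :=
  S ⊆ D.verts ∧ S.card < D.verts.card ∧
  ∃ u v : ℕ, u ≠ v ∧ D.bdry S = {u, v} ∧ IsOre4 ((D.induce S).addDigon u v)

/-- the potential of a digraph, with respect to parameters ε and δ -/
noncomputable def pot (D : Dgr) (ε δ : ℝ) : ℝ :=
  (10/3 + ε) * (D.nV : ℝ) - (D.nA : ℝ) - δ * (D.TT : ℝ)

end Dgr

namespace Dgr

/-- isomorphism of digraphs -/
def DIso (G H : Dgr) : Prop :=
  ∃ f : ℕ → ℕ, Set.BijOn f ↑G.verts ↑H.verts ∧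
    ∀ u ∈ G.verts, ∀ v ∈ G.verts, (G.Adj u v ↔ H.Adj (f u) (f v))

/-- a tournament: an oriented graph with exactly one arc between any two
distinct vertices -/
def IsTournament (T : Dgr) : Prop :=
  T.Oriented ∧ ∀ u ∈ T.verts, ∀ v ∈ T.verts, u ≠ v → (T.Adj u v ∨ T.Adj v u)

end Dgr

section AuxLemmas

open Relation Dgr

private lemma acy_mono' {r s : ℕ → ℕ → Prop} (h : ∀ u v, r u v → s u v)
    (hs : Dgr.Acy s) : Dgr.Acy r :=
  fun v hv => hs v (TransGen.mono h _ _ hv)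

private lemma acy_pair {r : ℕ → ℕ → Prop} {p q : ℕ} (hpq : p ≠ q)
    (h : ∀ u v, r u v → u = p ∧ v = q) : Dgr.Acy r := by
  have key : ∀ a c, Relation.TransGen r a c → a = p ∧ c = q := by
    intro a c htg
    induction htg with
    | single h1 => exact h _ _ h1
    | tail _ h2 ih => exact ⟨ih.1, (h _ _ h2).2⟩
  intro v hv
  obtain ⟨h1, h2⟩ := key _ _ hv
  exact hpq (h1.symm.trans h2)

private lemma dicol_mono_le {D : Dgr} {m m' : ℕ} (h : D.Dicolourable m) (hle : m ≤ m') :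
    D.Dicolourable m' := by
  obtain ⟨φ, hφ⟩ := h
  exact ⟨Fin.castLE hle ∘ φ,
    acy_mono' (fun u v hr => ⟨hr.1, Fin.castLE_injective hle hr.2⟩) hφ⟩

private lemma dicol_subd {H E : Dgr} (h : Dgr.Subd H E) {m : ℕ} (he : E.Dicolourable m) :
    H.Dicolourable m := by
  obtain ⟨φ, hφ⟩ := he
  exact ⟨φ, acy_mono' (fun u v hr => ⟨h.2 hr.1, hr.2⟩) hφ⟩

private lemma dicol_hom {E F : Dgr} (g : ℕ → ℕ)
    (hg : ∀ u v, F.Adj u v → E.Adj (g u) (g v)) {m : ℕ} (he : E.Dicolourable m) :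
    F.Dicolourable m := by
  obtain ⟨φ, hφ⟩ := he
  refine ⟨φ ∘ g, fun v hv => hφ (g v) ?_⟩
  exact Relation.TransGen.lift g (fun p q hr => (⟨hg _ _ hr.1, hr.2⟩ : _ ∧ _)) _ _ hv

private lemma dicol_of_dichr_le {H : Dgr} {n m : ℕ} (hH : H.Dicolourable n)
    (h : H.dichr ≤ m) : H.Dicolourable m := by
  have hne : ({t | H.Dicolourable t} : Set ℕ).Nonempty := ⟨n, hH⟩
  have hmem := Nat.sInf_mem hne
  have h' : sInf {t | H.Dicolourable t} ≤ m := h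
  exact dicol_mono_le hmem h'

private lemma dichr_eq_of {D : Dgr} {k : ℕ} (hk : 0 < k) (h1 : D.Dicolourable k)
    (h2 : ¬ D.Dicolourable (k - 1)) : D.dichr = k := by
  refine le_antisymm (Nat.sInf_le h1) ?_
  by_contra hlt
  push_neg at hlt
  have hmem := Nat.sInf_mem (⟨k, h1⟩ : Set.Nonempty {t | D.Dicolourable t})
  have h3 : sInf {t | D.Dicolourable t} < k := hlt
  exact h2 (dicol_mono_le hmem (by omega))

private lemma dicol_unused {E : Dgr} {m : ℕ} (hm : 0 < m) (φ : ℕ → Fin (m + 1))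
    (hφ : E.IsDicol φ) (c : Fin (m + 1)) (hc : ∀ v ∈ E.verts, φ v ≠ c) :
    E.Dicolourable m := by
  classical
  refine ⟨fun v => if h : φ v ≠ c then (Fin.exists_succAbove_eq h).choose else ⟨0, hm⟩, ?_⟩
  refine acy_mono' (fun u v hr => ⟨hr.1, ?_⟩) hφ
  obtain ⟨hm1, hm2⟩ := E.adj_mem hr.1
  have h1 := hc u hm1
  have h2 := hc v hm2
  have e1 := (Fin.exists_succAbove_eq h1).choose_spec
  have e2 := (Fin.exists_succAbove_eq h2).choose_spec
  have h3 := hr.2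
  dsimp only at h3
  rw [dif_pos h1, dif_pos h2] at h3
  rw [← e1, ← e2, h3]

private lemma diso_homs {G E : Dgr} (h : Dgr.DIso G E) :
    ∃ f g : ℕ → ℕ,
      (∀ u v, G.Adj u v → E.Adj (f u) (f v)) ∧
      (∀ u v, E.Adj u v → G.Adj (g u) (g v)) ∧
      (∀ v ∈ E.verts, g v ∈ G.verts) ∧
      (∀ u v, u ∈ E.verts → v ∈ E.verts → g u = g v → u = v) := by
  classical
  obtain ⟨f, hbij, hiff⟩ := h
  have hsur : ∀ v ∈ E.verts, ∃ u ∈ G.verts, f u = v := by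
    intro v hv
    obtain ⟨u, hu, hfu⟩ := hbij.surjOn (Finset.mem_coe.2 hv)
    exact ⟨u, Finset.mem_coe.1 hu, hfu⟩
  refine ⟨f, fun v => if h : ∃ u ∈ G.verts, f u = v then h.choose else 0, ?_, ?_, ?_, ?_⟩
  case _ =>
    intro u v huv
    obtain ⟨hu, hv⟩ := G.adj_mem huv
    exact (hiff u hu v hv).1 huv
  all_goals {
    have hgspec : ∀ v ∈ E.verts,
        (if h : ∃ u ∈ G.verts, f u = v then h.choose else 0) ∈ G.verts ∧
        f (if h : ∃ u ∈ G.verts, f u = v then h.choose else 0) = v := by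
      intro v hv
      have hex := hsur v hv
      rw [dif_pos hex]
      exact ⟨hex.choose_spec.1, hex.choose_spec.2⟩
    first
    | · intro u v huv
        obtain ⟨hu, hv⟩ := E.adj_mem huv
        obtain ⟨hgu, hfu⟩ := hgspec u hu
        obtain ⟨hgv, hfv⟩ := hgspec v hv
        refine (hiff _ hgu _ hgv).2 ?_
        rw [hfu, hfv]; exact huv
    | · intro v hv; exact (hgspec v hv).1
    | · intro u v hu hv hguv
        have e1 := (hgspec u hu).2
        have e2 := (hgspec v hv).2
        dsimp only at hguv
        rw [← e1, ← e2, hguv]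
  }

end AuxLemmas

section MasterLemma

open Relation Dgr

private abbrev RCrel (C : ℕ → ℕ → Dgr) (R : ℕ → ℕ → Prop) (x y : ℕ) : ℕ → ℕ → Prop :=
  fun p q => R p q ∧ p ∈ (C x y).verts ∧ q ∈ (C x y).verts

private abbrev WWrel {α : Type} (T : Dgr) (C : ℕ → ℕ → Dgr) (φ : ℕ → α)
    (R : ℕ → ℕ → Prop) : ℕ → ℕ → Prop :=
  fun t x => (t ∈ T.verts ∧ x ∈ T.verts ∧ R t x) ∨
    (T.Adj x t ∧ φ t = φ x ∧ (∃ w ∈ (C x t).verts, R t w) ∧ ∃ w' ∈ (C x t).verts, R w' x)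

private lemma clsCClemma {T D : Dgr} {C : ℕ → ℕ → Dgr}
    (hdisjT : ∀ x y, T.Adj x y → Disjoint T.verts (C x y).verts)
    (hpair : ∀ ⦃x y x' y' : ℕ⦄, T.Adj x y → T.Adj x' y' →
      ∀ v, v ∈ (C x y).verts → v ∈ (C x' y').verts → x = x' ∧ y = y')
    (hadj : ∀ u v, D.Adj u v ↔
      T.Adj u v ∨ (∃ x y, T.Adj x y ∧ (C x y).Adj u v) ∨
      (∃ x y, T.Adj x y ∧ u = y ∧ v ∈ (C x y).verts) ∨
      (∃ x y, T.Adj x y ∧ v = x ∧ u ∈ (C x y).verts))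
    {x y u v : ℕ} (hxy : T.Adj x y) (hu : u ∈ (C x y).verts) (hv : v ∈ (C x y).verts)
    (huv : D.Adj u v) : (C x y).Adj u v := by
  rcases (hadj u v).1 huv with hT' | ⟨x', y', hxy', hC⟩ | ⟨x', y', hxy', hay, hb⟩ |
    ⟨x', y', hxy', hbx, haC⟩
  · exact absurd hu (Finset.disjoint_left.mp (hdisjT _ _ hxy) (T.adj_mem hT').1)
  · obtain ⟨ha', _⟩ := (C x' y').adj_mem hC
    obtain ⟨hx, hy⟩ := hpair hxy' hxy u ha' hu
    rw [← hx, ← hy]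
    exact hC
  · exact absurd hu (Finset.disjoint_left.mp (hdisjT _ _ hxy)
      (by rw [hay]; exact (T.adj_mem hxy').2))
  · obtain ⟨hx, hy⟩ := hpair hxy' hxy u haC hu
    exact absurd hv (Finset.disjoint_left.mp (hdisjT _ _ hxy)
      (by rw [hbx, hx]; exact (T.adj_mem hxy).1))

private lemma clsTTlemma {T D : Dgr} {C : ℕ → ℕ → Dgr}
    (hdisjT : ∀ x y, T.Adj x y → Disjoint T.verts (C x y).verts)
    (hadj : ∀ u v, D.Adj u v ↔
      T.Adj u v ∨ (∃ x y, T.Adj x y ∧ (C x y).Adj u v) ∨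
      (∃ x y, T.Adj x y ∧ u = y ∧ v ∈ (C x y).verts) ∨
      (∃ x y, T.Adj x y ∧ v = x ∧ u ∈ (C x y).verts))
    {u v : ℕ} (hu : u ∈ T.verts) (hv : v ∈ T.verts) (huv : D.Adj u v) : T.Adj u v := by
  rcases (hadj u v).1 huv with hT' | ⟨x', y', hxy', hC⟩ | ⟨x', y', hxy', hay, hb⟩ |
    ⟨x', y', hxy', hbx, haC⟩
  · exact hT'
  · exact absurd ((C x' y').adj_mem hC).1 (Finset.disjoint_left.mp (hdisjT _ _ hxy') hu)
  · exact absurd hb (Finset.disjoint_left.mp (hdisjT _ _ hxy') hv)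
  · exact absurd haC (Finset.disjoint_left.mp (hdisjT _ _ hxy') hu)

private lemma master {α : Type} (T D : Dgr) (C : ℕ → ℕ → Dgr) (φ : ℕ → α)
    (hdisjT : ∀ x y, T.Adj x y → Disjoint T.verts (C x y).verts)
    (hpair : ∀ ⦃x y x' y' : ℕ⦄, T.Adj x y → T.Adj x' y' →
      ∀ v, v ∈ (C x y).verts → v ∈ (C x' y').verts → x = x' ∧ y = y')
    (hverts : ∀ v, v ∈ D.verts ↔ v ∈ T.verts ∨ ∃ x y, T.Adj x y ∧ v ∈ (C x y).verts)
    (hadj : ∀ u v, D.Adj u v ↔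
      T.Adj u v ∨ (∃ x y, T.Adj x y ∧ (C x y).Adj u v) ∨
      (∃ x y, T.Adj x y ∧ u = y ∧ v ∈ (C x y).verts) ∨
      (∃ x y, T.Adj x y ∧ v = x ∧ u ∈ (C x y).verts))
    (R : ℕ → ℕ → Prop) (hR : ∀ u v, R u v → D.Adj u v ∧ φ u = φ v)
    (H1 : ∀ x y, T.Adj x y → Dgr.Acy (RCrel C R x y))
    (H2 : Dgr.Acy (WWrel T C φ R)) :
    Dgr.Acy R := by
  have disjTC : ∀ {x y v}, T.Adj x y → v ∈ T.verts → v ∈ (C x y).verts → False :=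
    fun hxy hv hvc => Finset.disjoint_left.mp (hdisjT _ _ hxy) hv hvc
  have clsC : ∀ {x y p q}, T.Adj x y → p ∈ (C x y).verts → R p q →
      q ∈ (C x y).verts ∨ q = x := by
    intro x y p q hxy hp hpq
    rcases (hadj p q).1 (hR _ _ hpq).1 with hT' | ⟨x', y', hxy', hC⟩ |
      ⟨x', y', hxy', hay, hb⟩ | ⟨x', y', hxy', hbx, haC⟩
    · exact (disjTC hxy (T.adj_mem hT').1 hp).elim
    · obtain ⟨ha', hb'⟩ := (C x' y').adj_mem hC
      obtain ⟨hx, hy⟩ := hpair hxy' hxy p ha' hp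
      exact Or.inl (hx ▸ hy ▸ hb')
    · exact (disjTC hxy (by rw [hay]; exact (T.adj_mem hxy').2) hp).elim
    · obtain ⟨hx, hy⟩ := hpair hxy' hxy p haC hp
      exact Or.inr (by rw [hbx, hx])
  have clsT : ∀ {p q}, p ∈ T.verts → R p q →
      (q ∈ T.verts ∧ T.Adj p q) ∨ ∃ x, T.Adj x p ∧ q ∈ (C x p).verts := by
    intro p q hp hpq
    rcases (hadj p q).1 (hR _ _ hpq).1 with hT' | ⟨x', y', hxy', hC⟩ |
      ⟨x', y', hxy', hay, hb⟩ | ⟨x', y', hxy', hbx, haC⟩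
    · exact Or.inl ⟨(T.adj_mem hT').2, hT'⟩
    · exact (disjTC hxy' hp ((C x' y').adj_mem hC).1).elim
    · subst hay
      exact Or.inr ⟨x', hxy', hb⟩
    · exact (disjTC hxy' hp haC).elim
  have tgphi : ∀ {p q}, TransGen R p q → φ p = φ q := by
    intro p q h
    induction h with
    | single h1 => exact (hR _ _ h1).2
    | tail _ h2 ih => exact ih.trans (hR _ _ h2).2
  -- LEM1 : confinement of chains starting inside a copy
  have lem1 : ∀ {u v}, TransGen R u v → ∀ {x y}, T.Adj x y → u ∈ (C x y).verts →
      (v ∈ (C x y).verts ∧ TransGen (RCrel C R x y) u v) ∨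
      (∃ w', w' ∈ (C x y).verts ∧ R w' x ∧ (u = w' ∨ TransGen (RCrel C R x y) u w') ∧
        (x = v ∨ TransGen R x v)) := by
    intro u v h
    induction h with
    | single h1 =>
      intro x y hxy hu
      rcases clsC hxy hu h1 with hb | hb
      · exact Or.inl ⟨hb, TransGen.single ⟨h1, hu, hb⟩⟩
      · exact Or.inr ⟨u, hu, hb ▸ h1, Or.inl rfl, Or.inl hb.symm⟩
    | @tail b c h1 h2 ih =>
      intro x y hxy hu
      rcases ih hxy hu with ⟨hv, htg⟩ | ⟨w', hw', hwx, hpre, hsuf⟩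
      · rcases clsC hxy hv h2 with hc | hc
        · exact Or.inl ⟨hc, htg.tail ⟨h2, hv, hc⟩⟩
        · exact Or.inr ⟨_, hv, hc ▸ h2, Or.inr htg, Or.inl hc.symm⟩
      · refine Or.inr ⟨w', hw', hwx, hpre, ?_⟩
        rcases hsuf with he | hsuf
        · exact Or.inr (TransGen.single (by rw [he]; exact h2))
        · exact Or.inr (hsuf.tail h2)
  -- LEM2 : chains starting at a T-vertex
  have lem2 : ∀ {u v}, TransGen R u v → u ∈ T.verts →
      (v ∈ T.verts ∧ TransGen (WWrel T C φ R) u v) ∨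
      (∃ x y, T.Adj x y ∧ v ∈ (C x y).verts ∧ ReflTransGen (WWrel T C φ R) u y ∧
        ∃ w, w ∈ (C x y).verts ∧ R y w ∧ (w = v ∨ TransGen (RCrel C R x y) w v)) := by
    intro u v h
    induction h with
    | single h1 =>
      intro hu
      rcases clsT hu h1 with ⟨hb, hT'⟩ | ⟨x, hxu, hb⟩
      · exact Or.inl ⟨hb, TransGen.single (Or.inl ⟨hu, hb, h1⟩)⟩
      · exact Or.inr ⟨x, u, hxu, hb, ReflTransGen.refl, _, hb, h1, Or.inl rfl⟩
    | @tail b c h1 h2 ih =>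
      intro hu
      rcases ih hu with ⟨hbT, htg⟩ | ⟨x, y, hxy, hb, hrtg, w, hw, hyw, hlast⟩
      · rcases clsT hbT h2 with ⟨hcT, hT'⟩ | ⟨x, hxb, hc⟩
        · exact Or.inl ⟨hcT, htg.tail (Or.inl ⟨hbT, hcT, h2⟩)⟩
        · exact Or.inr ⟨x, _, hxb, hc, htg.to_reflTransGen, _, hc, h2, Or.inl rfl⟩
      · rcases clsC hxy hb h2 with hc | hc
        · refine Or.inr ⟨x, y, hxy, hc, hrtg, w, hw, hyw, ?_⟩
          rcases hlast with he | hlast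
          · exact Or.inr (TransGen.single ⟨(by rw [he]; exact h2), hw, hc⟩)
          · exact Or.inr (hlast.tail ⟨h2, hb, hc⟩)
        · -- hc : c = x : exit to x
          have hx : x ∈ T.verts := (T.adj_mem hxy).1
          have hRbx : R b x := by rw [← hc]; exact h2
          have hφ : φ y = φ x := by
            have e1 : φ y = φ w := (hR _ _ hyw).2
            have e2 : φ w = φ b := by
              rcases hlast with he | hlast
              · rw [he]
              · exact tgphi (TransGen.mono (fun p q hpq => hpq.1) _ _ hlast)
            have e3 : φ b = φ x := (hR _ _ hRbx).2
            exact (e1.trans e2).trans e3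
          have hstep : WWrel T C φ R y x :=
            Or.inr ⟨hxy, hφ, ⟨w, hw, hyw⟩, ⟨b, hb, hRbx⟩⟩
          exact Or.inl ⟨by rw [hc]; exact hx,
            by rw [hc]; exact Relation.TransGen.tail' hrtg hstep⟩
  have exists_step : ∀ {p q}, TransGen R p q → ∃ r, R p r := by
    intro p q h
    induction h with
    | single h1 => exact ⟨_, h1⟩
    | tail _ _ ih => exact ih
  have hTcase : ∀ t, t ∈ T.verts → ¬ TransGen R t t := by
    intro t ht htg
    rcases lem2 htg ht with ⟨_, htgWW⟩ | ⟨x, y, hxy, htC, _, _⟩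
    · exact H2 t htgWW
    · exact disjTC hxy ht htC
  intro v htg
  obtain ⟨w0, hvw0⟩ := exists_step htg
  have hv : v ∈ D.verts := (D.adj_mem (hR _ _ hvw0).1).1
  rcases (hverts v).1 hv with hvT | ⟨x, y, hxy, hvC⟩
  · exact hTcase v hvT htg
  · rcases lem1 htg hxy hvC with ⟨_, htgRC⟩ | ⟨w', hw', hwx, hpre, hsuf⟩
    · exact H1 x y hxy v htgRC
    · have hx : x ∈ T.verts := (T.adj_mem hxy).1
      have hvx : TransGen R v x := by
        rcases hpre with he | hpre
        · rw [he]; exact TransGen.single hwx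
        · exact (TransGen.mono (fun p q hpq => hpq.1) _ _ hpre).tail hwx
      rcases hsuf with he | hsuf
      · exact disjTC hxy (he ▸ hx) hvC
      · exact hTcase x hx (hsuf.trans hvx)

end MasterLemma

section CritColouring

open Relation Dgr

open Classical in
private noncomputable def mkcol {α : Type} (T : Dgr) (C : ℕ → ℕ → Dgr)
    (Ψ : ℕ → ℕ → ℕ → α) (tc : ℕ → α) (v : ℕ) : α :=
  if h : ∃ p : ℕ × ℕ, T.Adj p.1 p.2 ∧ v ∈ (C p.1 p.2).verts then Ψ h.choose.1 h.choose.2 v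
  else tc v

private lemma mkcol_T {α : Type} {T : Dgr} {C : ℕ → ℕ → Dgr}
    {Ψ : ℕ → ℕ → ℕ → α} {tc : ℕ → α}
    (hdisjT : ∀ x y, T.Adj x y → Disjoint T.verts (C x y).verts)
    {v : ℕ} (hv : v ∈ T.verts) : mkcol T C Ψ tc v = tc v := by
  have hno : ¬ ∃ p : ℕ × ℕ, T.Adj p.1 p.2 ∧ v ∈ (C p.1 p.2).verts := by
    rintro ⟨p, hp, hvp⟩
    exact (Finset.disjoint_left.mp (hdisjT _ _ hp) hv) hvp
  unfold mkcol
  rw [dif_neg hno]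

private lemma mkcol_copy {α : Type} {T : Dgr} {C : ℕ → ℕ → Dgr}
    {Ψ : ℕ → ℕ → ℕ → α} {tc : ℕ → α}
    (hpair : ∀ ⦃x y x' y' : ℕ⦄, T.Adj x y → T.Adj x' y' →
      ∀ v, v ∈ (C x y).verts → v ∈ (C x' y').verts → x = x' ∧ y = y')
    {x y v : ℕ} (hxy : T.Adj x y) (hv : v ∈ (C x y).verts) :
    mkcol T C Ψ tc v = Ψ x y v := by
  have hex : ∃ p : ℕ × ℕ, T.Adj p.1 p.2 ∧ v ∈ (C p.1 p.2).verts := ⟨(x, y), hxy, hv⟩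
  have hspec := hex.choose_spec
  obtain ⟨h1, h2⟩ := hpair hspec.1 hxy v hspec.2 hv
  unfold mkcol
  rw [dif_pos hex, h1, h2]

private lemma crit_colouring (j : ℕ) (T D : Dgr) (C : ℕ → ℕ → Dgr)
    (hTor : T.Oriented) (hTk : T.verts.card = j + 2)
    (hdisjT : ∀ x y, T.Adj x y → Disjoint T.verts (C x y).verts)
    (hpair : ∀ ⦃x y x' y' : ℕ⦄, T.Adj x y → T.Adj x' y' →
      ∀ v, v ∈ (C x y).verts → v ∈ (C x' y').verts → x = x' ∧ y = y')
    (hverts : ∀ v, v ∈ D.verts ↔ v ∈ T.verts ∨ ∃ x y, T.Adj x y ∧ v ∈ (C x y).verts)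
    (hadj : ∀ u v, D.Adj u v ↔
      T.Adj u v ∨ (∃ x y, T.Adj x y ∧ (C x y).Adj u v) ∨
      (∃ x y, T.Adj x y ∧ u = y ∧ v ∈ (C x y).verts) ∨
      (∃ x y, T.Adj x y ∧ v = x ∧ u ∈ (C x y).verts))
    (x₀ y₀ : ℕ) (h₀ : T.Adj x₀ y₀) (a b : ℕ)
    (Ψ : ℕ → ℕ → ℕ → Fin (j + 1))
    (hΨ : ∀ x y, T.Adj x y → Dgr.Acy (fun u v => (C x y).Adj u v ∧ Ψ x y u = Ψ x y v))
    (ψ₀ : Fin (j + 1) → ℕ → Fin (j + 1))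
    (hS1 : ∀ c, Dgr.Acy (fun u v => ((C x₀ y₀).Adj u v ∧ ¬(u = a ∧ v = b)) ∧
      ψ₀ c u = ψ₀ c v))
    (hcase : (a = x₀ ∧ b = y₀) ∨ ∀ c,
      (∀ w ∈ (C x₀ y₀).verts, ψ₀ c w = c → y₀ = a ∧ w = b) ∨
      (∀ w ∈ (C x₀ y₀).verts, ψ₀ c w = c → w = a ∧ x₀ = b)) :
    ∃ φ : ℕ → Fin (j + 1),
      Dgr.Acy (fun u v => (D.Adj u v ∧ ¬(u = a ∧ v = b)) ∧ φ u = φ v) := by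
  classical
  have hx₀ : x₀ ∈ T.verts := (T.adj_mem h₀).1
  have hy₀ : y₀ ∈ T.verts := (T.adj_mem h₀).2
  have hne : x₀ ≠ y₀ := fun h => T.adj_irrefl y₀ (h ▸ h₀)
  have hscard : (T.verts.erase y₀).card = j + 1 := by
    rw [Finset.card_erase_of_mem hy₀, hTk]
    omega
  set eIso := (T.verts.erase y₀).orderIsoOfFin hscard with heIso
  have hx₀s : x₀ ∈ T.verts.erase y₀ := Finset.mem_erase.2 ⟨hne, hx₀⟩
  set c : Fin (j + 1) := eIso.symm ⟨x₀, hx₀s⟩ with hcdef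
  set Tcol : ℕ → Fin (j + 1) :=
    fun v => if h : v ∈ T.verts.erase y₀ then eIso.symm ⟨v, h⟩ else c with hTcoldef
  have hTmem : ∀ z ∈ T.verts, z ∉ T.verts.erase y₀ → z = y₀ := by
    intro z hz hzs
    by_contra h
    exact hzs (Finset.mem_erase.2 ⟨h, hz⟩)
  have hTcol_s : ∀ z (h : z ∈ T.verts.erase y₀), Tcol z = eIso.symm ⟨z, h⟩ := by
    intro z h
    simp only [hTcoldef, dif_pos h]
  have hTcol_y₀ : Tcol y₀ = c := by
    simp only [hTcoldef, dif_neg (Finset.notMem_erase y₀ T.verts)]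
  have hTx₀ : Tcol x₀ = c := by
    rw [hTcol_s x₀ hx₀s]
  have hF1 : ∀ t ∈ T.verts, ∀ x ∈ T.verts, Tcol t = Tcol x →
      t = x ∨ (t = x₀ ∧ x = y₀) ∨ (t = y₀ ∧ x = x₀) := by
    intro t ht x hx he
    by_cases h1 : t ∈ T.verts.erase y₀ <;> by_cases h2 : x ∈ T.verts.erase y₀
    · rw [hTcol_s t h1, hTcol_s x h2] at he
      have := eIso.symm.injective he
      exact Or.inl (congrArg Subtype.val this)
    · have hx' := hTmem x hx h2
      rw [hTcol_s t h1, hx', hTcol_y₀, hcdef] at he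
      have := eIso.symm.injective he
      exact Or.inr (Or.inl ⟨congrArg Subtype.val this, hx'⟩)
    · have ht' := hTmem t ht h1
      rw [hTcol_s x h2, ht', hTcol_y₀, hcdef] at he
      have := eIso.symm.injective he.symm
      exact Or.inr (Or.inr ⟨ht', congrArg Subtype.val this⟩)
    · exact Or.inl ((hTmem t ht h1).trans (hTmem x hx h2).symm)
  -- the global colouring
  set Ψ' : ℕ → ℕ → ℕ → Fin (j + 1) :=
    fun x y => if x = x₀ ∧ y = y₀ then ψ₀ c else Ψ x y with hΨ'def
  set φ : ℕ → Fin (j + 1) := mkcol T C Ψ' Tcol with hφdef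
  have φT : ∀ v ∈ T.verts, φ v = Tcol v := fun v hv => mkcol_T hdisjT hv
  have φC : ∀ x y, T.Adj x y → ∀ v ∈ (C x y).verts, φ v = Ψ' x y v :=
    fun x y hxy v hv => mkcol_copy hpair hxy hv
  have φC0 : ∀ v ∈ (C x₀ y₀).verts, φ v = ψ₀ c v := by
    intro v hv
    rw [φC x₀ y₀ h₀ v hv, hΨ'def]
    dsimp only
    rw [if_pos (⟨rfl, rfl⟩ : x₀ = x₀ ∧ y₀ = y₀)]
  have φCother : ∀ x y, T.Adj x y → ¬(x = x₀ ∧ y = y₀) → ∀ v ∈ (C x y).verts,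
      φ v = Ψ x y v := by
    intro x y hxy hno v hv
    rw [φC x y hxy v hv, hΨ'def]
    dsimp only
    rw [if_neg hno]
  set R : ℕ → ℕ → Prop :=
    fun u v => D.Adj u v ∧ ¬(u = a ∧ v = b) ∧ φ u = φ v with hRdef
  have hR : ∀ u v, R u v → D.Adj u v ∧ φ u = φ v := fun u v h => ⟨h.1, h.2.2⟩
  have H1 : ∀ x y, T.Adj x y → Dgr.Acy (RCrel C R x y) := by
    intro x y hxy
    by_cases hxy0 : x = x₀ ∧ y = y₀
    · obtain ⟨he1, he2⟩ := hxy0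
      subst he1; subst he2
      refine acy_mono' (fun u v hr => ?_) (hS1 c)
      obtain ⟨⟨hD, hnab, hφeq⟩, hu, hv⟩ := hr
      refine ⟨⟨clsCClemma hdisjT hpair hadj hxy hu hv hD, hnab⟩, ?_⟩
      rw [← φC0 u hu, ← φC0 v hv]
      exact hφeq
    · refine acy_mono' (fun u v hr => ?_) (hΨ x y hxy)
      obtain ⟨⟨hD, hnab, hφeq⟩, hu, hv⟩ := hr
      refine ⟨clsCClemma hdisjT hpair hadj hxy hu hv hD, ?_⟩
      rw [← φCother x y hxy hxy0 u hu, ← φCother x y hxy hxy0 v hv]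
      exact hφeq
  have hWWbase : ∀ t x, WWrel T C φ R t x → (t ∈ T.verts ∧ x ∈ T.verts ∧ t ≠ x ∧
      Tcol t = Tcol x) := by
    intro t x hww
    rcases hww with ⟨ht, hx, hRtx⟩ | ⟨hxt, hφeq, _, _⟩
    · refine ⟨ht, hx, fun h => D.adj_irrefl x (h ▸ hRtx.1), ?_⟩
      rw [← φT t ht, ← φT x hx]
      exact hRtx.2.2
    · have ht := (T.adj_mem hxt).2
      have hx := (T.adj_mem hxt).1
      refine ⟨ht, hx, fun h => T.adj_irrefl x (h ▸ hxt), ?_⟩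
      rw [← φT t ht, ← φT x hx]
      exact hφeq
  have H2 : Dgr.Acy (WWrel T C φ R) := by
    rcases hcase with ⟨ha, hb⟩ | hblk
    · -- removed arc is the T-arc (x₀, y₀); WW ⊆ {(y₀, x₀)}
      refine acy_pair (p := y₀) (q := x₀) (Ne.symm hne) ?_
      intro t x hww
      obtain ⟨ht, hx, htx, hTcoleq⟩ := hWWbase t x hww
      rcases hF1 t ht x hx hTcoleq with he | ⟨he1, he2⟩ | ⟨he1, he2⟩
      · exact absurd he htx
      · subst he1; subst he2
        rcases hww with ⟨_, _, hRtx⟩ | ⟨hxt, _, _, _⟩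
        · exact absurd ⟨ha.symm, hb.symm⟩ hRtx.2.1
        · exact absurd hxt (hTor h₀)
      · exact ⟨he1, he2⟩
    · -- WW ⊆ {(x₀, y₀)}
      refine acy_pair (p := x₀) (q := y₀) hne ?_
      intro t x hww
      obtain ⟨ht, hx, htx, hTcoleq⟩ := hWWbase t x hww
      rcases hF1 t ht x hx hTcoleq with he | ⟨he1, he2⟩ | ⟨he1, he2⟩
      · exact absurd he htx
      · exact ⟨he1, he2⟩
      · subst he1; subst he2
        rcases hww with ⟨_, _, hRtx⟩ | ⟨hxt, hφeq, hentry, hexit⟩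
        · exact absurd (clsTTlemma hdisjT hadj ht hx hRtx.1) (hTor h₀)
        · obtain ⟨w, hw, hRyw⟩ := hentry
          obtain ⟨w', hw', hRwx⟩ := hexit
          have hψw : ψ₀ c w = c := by
            have := hRyw.2.2
            rw [φT _ hy₀, hTcol_y₀, φC0 w hw] at this
            exact this.symm
          have hψw' : ψ₀ c w' = c := by
            have := hRwx.2.2
            rw [φT _ hx₀, hTx₀, φC0 w' hw'] at this
            exact this
          rcases hblk c with hbl | hbl
          · exact absurd (hbl w hw hψw) hRyw.2.1
          · exact absurd (hbl w' hw' hψw') hRwx.2.1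
  have hmain := master T D C φ hdisjT hpair hverts hadj R hR H1 H2
  exact ⟨φ, acy_mono' (fun u v h => ⟨h.1.1, h.1.2, h.2⟩) hmain⟩

end CritColouring

private def delArc (E : Dgr) (a b : ℕ) : Dgr where
  verts := E.verts
  Adj u v := E.Adj u v ∧ ¬(u = a ∧ v = b)
  adj_mem := fun _ _ h => E.adj_mem h.1
  adj_irrefl := fun v h => E.adj_irrefl v h.1


/-- the digraph obtained from a tournament `T` on `k ≥ 4` vertices
by adding, for each arc `xy` of `T`, a disjoint copy `C x y` of a fixed
`(k−1)`-dicritical oriented graph `G` together with all arcs from `y` to the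
copy and from the copy to `x`, is `k`-dicritical. -/
theorem stmt_19 (k : ℕ) (hk : 4 ≤ k) (T G D : Dgr) (C : ℕ → ℕ → Dgr)
    (hT : T.IsTournament) (hTk : T.verts.card = k)
    (hG : G.Oriented) (hGcrit : Dgr.Dicritical (k - 1) G)
    (hcopy : ∀ x y, T.Adj x y → Dgr.DIso G (C x y))
    (hdisjT : ∀ x y, T.Adj x y → Disjoint T.verts (C x y).verts)
    (hdisjC : ∀ x y x' y', T.Adj x y → T.Adj x' y' → (x, y) ≠ (x', y') →
      Disjoint (C x y).verts (C x' y').verts)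
    (hverts : ∀ v, v ∈ D.verts ↔ v ∈ T.verts ∨ ∃ x y, T.Adj x y ∧ v ∈ (C x y).verts)
    (hadj : ∀ u v, D.Adj u v ↔
      T.Adj u v ∨ (∃ x y, T.Adj x y ∧ (C x y).Adj u v) ∨
      (∃ x y, T.Adj x y ∧ u = y ∧ v ∈ (C x y).verts) ∨
      (∃ x y, T.Adj x y ∧ v = x ∧ u ∈ (C x y).verts)) :
    Dgr.Dicritical k D := by
  classical
  obtain ⟨j, rfl⟩ : ∃ j, k = j + 2 := ⟨k - 2, by omega⟩
  have hj : 2 ≤ j := by omega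
  have hTor : T.Oriented := hT.1
  have hGcrit' : Dgr.Dicritical (j + 1) G := by
    have he : j + 2 - 1 = j + 1 := by omega
    rwa [he] at hGcrit
  have hpair : ∀ ⦃x y x' y' : ℕ⦄, T.Adj x y → T.Adj x' y' →
      ∀ v, v ∈ (C x y).verts → v ∈ (C x' y').verts → x = x' ∧ y = y' := by
    intro x y x' y' h1 h2 v hv1 hv2
    by_contra hno
    have hne : ((x, y) : ℕ × ℕ) ≠ (x', y') := fun hp => hno (Prod.mk.inj hp)
    exact Finset.disjoint_left.mp (hdisjC x y x' y' h1 h2 hne) hv1 hv2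
  -- facts about G
  have hGSne : ({t | G.Dicolourable t} : Set ℕ).Nonempty := by
    by_contra h
    rw [Set.not_nonempty_iff_eq_empty] at h
    have h0 : G.dichr = 0 := by
      have he : G.dichr = sInf {t | G.Dicolourable t} := rfl
      rw [he, h, Nat.sInf_empty]
    exact absurd (hGcrit'.1.symm.trans h0) (by omega)
  have hGcol : G.Dicolourable (j + 1) := by
    have hmem := Nat.sInf_mem hGSne
    have he : sInf {t | G.Dicolourable t} = j + 1 := hGcrit'.1
    rwa [he] at hmem
  have hGnot : ¬ G.Dicolourable j := by
    intro h
    have h2 : G.dichr ≤ j := Nat.sInf_le h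
    rw [hGcrit'.1] at h2
    omega
  have hGsub : ∀ H', Dgr.ProperSubd H' G → H'.Dicolourable j := by
    intro H' hp
    have h1 : H'.Dicolourable (j + 1) := dicol_subd hp.1 hGcol
    have h2 := hGcrit'.2 H' hp
    exact dicol_of_dichr_le h1 (by omega)
  -- colourings of the copies
  have hΨex : ∀ x y, ∃ ψ : ℕ → Fin (j + 1), T.Adj x y →
      Dgr.Acy (fun u v => (C x y).Adj u v ∧ ψ u = ψ v) := by
    intro x y
    by_cases hxy : T.Adj x y
    · obtain ⟨f, g, hf, hg, hgmem, hginj⟩ := diso_homs (hcopy x y hxy)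
      obtain ⟨ψ, hψ⟩ := dicol_hom g hg hGcol
      exact ⟨ψ, fun _ => hψ⟩
    · exact ⟨fun _ => 0, fun h => absurd h hxy⟩
  choose Ψ hΨfull using hΨex
  -- upper bound : D is (j+2)-dicolourable
  have hup : D.Dicolourable (j + 2) := by
    set e2 := T.verts.orderIsoOfFin hTk with he2
    set Tcol2 : ℕ → Fin (j + 2) :=
      fun v => if h : v ∈ T.verts then e2.symm ⟨v, h⟩ else 0 with hTcol2
    set Ψ2 : ℕ → ℕ → ℕ → Fin (j + 2) := fun x y v => Fin.castSucc (Ψ x y v) with hΨ2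
    set φ : ℕ → Fin (j + 2) := mkcol T C Ψ2 Tcol2 with hφdef
    have φT : ∀ v ∈ T.verts, φ v = Tcol2 v := fun v hv => mkcol_T hdisjT hv
    have φC : ∀ x y, T.Adj x y → ∀ v ∈ (C x y).verts, φ v = Ψ2 x y v :=
      fun x y hxy v hv => mkcol_copy hpair hxy hv
    have hTinj : ∀ t ∈ T.verts, ∀ x ∈ T.verts, Tcol2 t = Tcol2 x → t = x := by
      intro t ht x hx he
      rw [hTcol2] at he
      dsimp only at he
      rw [dif_pos ht, dif_pos hx] at he
      exact congrArg Subtype.val (e2.symm.injective he)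
    set R : ℕ → ℕ → Prop := fun u v => D.Adj u v ∧ φ u = φ v with hRdef
    have hR : ∀ u v, R u v → D.Adj u v ∧ φ u = φ v := fun u v h => h
    have H1 : ∀ x y, T.Adj x y → Dgr.Acy (RCrel C R x y) := by
      intro x y hxy
      refine acy_mono' (fun u v hr => ?_) (hΨfull x y hxy)
      obtain ⟨⟨hD, hφeq⟩, hu, hv⟩ := hr
      refine ⟨clsCClemma hdisjT hpair hadj hxy hu hv hD, ?_⟩
      have he := hφeq
      rw [φC x y hxy u hu, φC x y hxy v hv, hΨ2] at he
      dsimp only at he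
      exact Fin.castSucc_injective _ he
    have H2 : Dgr.Acy (WWrel T C φ R) := by
      refine acy_pair (p := 0) (q := 1) (by omega) ?_
      intro t x hww
      exfalso
      rcases hww with ⟨ht, hx, hRtx⟩ | ⟨hxt, hφeq, _, _⟩
      · have hT' := clsTTlemma hdisjT hadj ht hx hRtx.1
        have he : Tcol2 t = Tcol2 x := by
          rw [← φT t ht, ← φT x hx]; exact hRtx.2
        have htx := hTinj t ht x hx he
        exact T.adj_irrefl x (htx ▸ hT')
      · have ht := (T.adj_mem hxt).2
        have hx := (T.adj_mem hxt).1
        have he : Tcol2 t = Tcol2 x := by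
          rw [← φT t ht, ← φT x hx]; exact hφeq
        have htx := hTinj t ht x hx he
        exact T.adj_irrefl x (htx ▸ hxt)
    have hmain := master T D C φ hdisjT hpair hverts hadj R hR H1 H2
    exact ⟨φ, hmain⟩
  -- lower bound : D is not (j+1)-dicolourable
  have hnot : ¬ D.Dicolourable (j + 1) := by
    rintro ⟨φ, hφ⟩
    have hdistinct : ∀ x y, T.Adj x y → φ x ≠ φ y := by
      intro x y hxy he
      have hCadjD : ∀ u v, (C x y).Adj u v → D.Adj u v :=
        fun u v h => (hadj u v).2 (Or.inr (Or.inl ⟨x, y, hxy, h⟩))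
      have hcopyD : Dgr.Acy (fun u v => (C x y).Adj u v ∧ φ u = φ v) :=
        acy_mono' (fun u v h => ⟨hCadjD _ _ h.1, h.2⟩) hφ
      have hexists : ∃ v ∈ (C x y).verts, φ v = φ x := by
        by_contra hno
        push_neg at hno
        have h1 : (C x y).Dicolourable j :=
          dicol_unused (by omega) φ hcopyD (φ x) hno
        obtain ⟨f, g, hf, hg, _, _⟩ := diso_homs (hcopy x y hxy)
        exact hGnot (dicol_hom f hf h1)
      obtain ⟨v, hv, hφv⟩ := hexists
      have h1 : D.Adj x y := (hadj x y).2 (Or.inl hxy)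
      have h2 : D.Adj y v := (hadj y v).2 (Or.inr (Or.inr (Or.inl ⟨x, y, hxy, rfl, hv⟩)))
      have h3 : D.Adj v x := (hadj v x).2 (Or.inr (Or.inr (Or.inr ⟨x, y, hxy, rfl, hv⟩)))
      refine hφ x ?_
      have s1 : Relation.TransGen (fun u v => D.Adj u v ∧ φ u = φ v) x y :=
        Relation.TransGen.single ⟨h1, he⟩
      have s2 := s1.tail ⟨h2, he.symm.trans hφv.symm⟩
      exact s2.tail ⟨h3, hφv⟩
    have hinj : Set.InjOn φ ↑T.verts := by
      intro u hu v hv he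
      by_contra hne2
      rcases hT.2 u (Finset.mem_coe.1 hu) v (Finset.mem_coe.1 hv) hne2 with h | h
      · exact hdistinct u v h he
      · exact hdistinct v u h he.symm
    have hcard := Finset.card_le_card_of_injOn φ (fun a _ => Finset.mem_univ _) hinj
    rw [hTk, Finset.card_univ, Fintype.card_fin] at hcard
    omega
  constructor
  · refine dichr_eq_of (by omega) hup ?_
    have he : j + 2 - 1 = j + 1 := by omega
    rw [he]
    exact hnot
  · intro H hHp
    have harc : ∃ p q, D.Adj p q ∧ ¬ H.Adj p q := by
      by_contra hno
      push_neg at hno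
      refine hHp.2 ⟨fun v hv => ?_, fun u v h => hno u v h⟩
      rcases (hverts v).1 hv with hvT | ⟨x, y, hxy, hvC⟩
      · obtain ⟨u, hu, hune⟩ := Finset.exists_mem_ne (by rw [hTk]; omega) v
        rcases hT.2 u hu v hvT hune with h | h
        · exact (H.adj_mem (hno _ _ ((hadj u v).2 (Or.inl h)))).2
        · exact (H.adj_mem (hno _ _ ((hadj v u).2 (Or.inl h)))).1
      · exact (H.adj_mem (hno _ _ ((hadj v x).2
          (Or.inr (Or.inr (Or.inr ⟨x, y, hxy, rfl, hvC⟩)))))).1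
    obtain ⟨p, q, hpq, hHpq⟩ := harc
    have hdel : ∃ φ : ℕ → Fin (j + 1),
        Dgr.Acy (fun u v => (D.Adj u v ∧ ¬(u = p ∧ v = q)) ∧ φ u = φ v) := by
      rcases (hadj p q).1 hpq with hT' | ⟨x, y, hxy, hC⟩ | ⟨x, y, hxy, hpy, hqC⟩ |
        ⟨x, y, hxy, hqx, hpC⟩
      · -- (i) a T-arc is removed
        refine crit_colouring j T D C hTor hTk hdisjT hpair hverts hadj p q hT' p q
          Ψ hΨfull (fun _ => Ψ p q) (fun c => ?_) (Or.inl ⟨rfl, rfl⟩)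
        exact acy_mono' (fun u v h => ⟨h.1.1, h.2⟩) (hΨfull p q hT')
      · -- (ii) an arc inside a copy is removed
        obtain ⟨f, g, hf, hg, hgmem, hginj⟩ := diso_homs (hcopy x y hxy)
        obtain ⟨hpC, hqC⟩ := (C x y).adj_mem hC
        have hGadj : G.Adj (g p) (g q) := hg _ _ hC
        have hGdel : (delArc G (g p) (g q)).Dicolourable j := by
          refine hGsub _ ⟨⟨Finset.Subset.refl _, fun u v h => h.1⟩, fun hsub => ?_⟩
          exact (hsub.2 hGadj).2 ⟨rfl, rfl⟩
        have hψ' : (delArc (C x y) p q).Dicolourable j := by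
          refine dicol_hom g (fun u v h => ?_) hGdel
          obtain ⟨hu, hv⟩ := (C x y).adj_mem h.1
          exact ⟨hg _ _ h.1, fun he =>
            h.2 ⟨hginj _ _ hu hpC he.1, hginj _ _ hv hqC he.2⟩⟩
        obtain ⟨ψ', hψ'acy⟩ := hψ'
        refine crit_colouring j T D C hTor hTk hdisjT hpair hverts hadj x y hxy p q
          Ψ hΨfull (fun c v => c.succAbove (ψ' v)) (fun c => ?_)
          (Or.inr (fun c => Or.inl (fun w _ hcw =>
            absurd hcw (Fin.succAbove_ne c (ψ' w)))))
        refine acy_mono' (fun u v h => ?_) hψ'acy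
        exact ⟨⟨h.1.1, h.1.2⟩, Fin.succAbove_right_injective h.2⟩
      · -- (iii) an arc y → copy-vertex is removed
        obtain ⟨f, g, hf, hg, hgmem, hginj⟩ := diso_homs (hcopy x y hxy)
        have hGdel : (G.del (g q)).Dicolourable j := by
          refine hGsub _ ⟨⟨Finset.erase_subset _ _, fun u v h => h.1⟩, fun hsub => ?_⟩
          exact (Finset.mem_erase.1 (hsub.1 (hgmem q hqC))).1 rfl
        have hψ' : ((C x y).del q).Dicolourable j := by
          refine dicol_hom g (fun u v h => ?_) hGdel
          obtain ⟨hu, hv⟩ := (C x y).adj_mem h.1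
          exact ⟨hg _ _ h.1, fun e => h.2.1 (hginj _ _ hu hqC e),
            fun e => h.2.2 (hginj _ _ hv hqC e)⟩
        obtain ⟨ψ', hψ'acy⟩ := hψ'
        have hkey : ∀ (c : Fin (j + 1)) z,
            (if z = q then c else c.succAbove (ψ' z)) = c → z = q := by
          intro c z hz
          by_contra hzq
          rw [if_neg hzq] at hz
          exact Fin.succAbove_ne c (ψ' z) hz
        refine crit_colouring j T D C hTor hTk hdisjT hpair hverts hadj x y hxy p q
          Ψ hΨfull (fun c v => if v = q then c else c.succAbove (ψ' v)) (fun c => ?_)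
          (Or.inr (fun c => Or.inl (fun w _ hcw => ⟨hpy.symm, hkey c w hcw⟩)))
        refine acy_mono' (fun u v h => ?_) hψ'acy
        obtain ⟨⟨hCadj, hnab⟩, heq⟩ := h
        have hu : u ≠ q := by
          intro he
          have h1 : (if u = q then c else c.succAbove (ψ' u)) = c := by rw [if_pos he]
          have h2 : (if v = q then c else c.succAbove (ψ' v)) = c := by
            rw [← heq]; exact h1
          have hvq := hkey c v h2
          rw [he, hvq] at hCadj
          exact (C x y).adj_irrefl q hCadj
        have hv : v ≠ q := by
          intro he
          have h2 : (if u = q then c else c.succAbove (ψ' u)) = c := by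
            rw [heq, if_pos he]
          have huq := hkey c u h2
          rw [he, huq] at hCadj
          exact (C x y).adj_irrefl q hCadj
        rw [if_neg hu, if_neg hv] at heq
        exact ⟨⟨hCadj, hu, hv⟩, Fin.succAbove_right_injective heq⟩
      · -- (iv) an arc copy-vertex → x is removed
        obtain ⟨f, g, hf, hg, hgmem, hginj⟩ := diso_homs (hcopy x y hxy)
        have hGdel : (G.del (g p)).Dicolourable j := by
          refine hGsub _ ⟨⟨Finset.erase_subset _ _, fun u v h => h.1⟩, fun hsub => ?_⟩
          exact (Finset.mem_erase.1 (hsub.1 (hgmem p hpC))).1 rfl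
        have hψ' : ((C x y).del p).Dicolourable j := by
          refine dicol_hom g (fun u v h => ?_) hGdel
          obtain ⟨hu, hv⟩ := (C x y).adj_mem h.1
          exact ⟨hg _ _ h.1, fun e => h.2.1 (hginj _ _ hu hpC e),
            fun e => h.2.2 (hginj _ _ hv hpC e)⟩
        obtain ⟨ψ', hψ'acy⟩ := hψ'
        have hkey : ∀ (c : Fin (j + 1)) z,
            (if z = p then c else c.succAbove (ψ' z)) = c → z = p := by
          intro c z hz
          by_contra hzq
          rw [if_neg hzq] at hz
          exact Fin.succAbove_ne c (ψ' z) hz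
        refine crit_colouring j T D C hTor hTk hdisjT hpair hverts hadj x y hxy p q
          Ψ hΨfull (fun c v => if v = p then c else c.succAbove (ψ' v)) (fun c => ?_)
          (Or.inr (fun c => Or.inr (fun w _ hcw => ⟨hkey c w hcw, hqx.symm⟩)))
        refine acy_mono' (fun u v h => ?_) hψ'acy
        obtain ⟨⟨hCadj, hnab⟩, heq⟩ := h
        have hu : u ≠ p := by
          intro he
          have h1 : (if u = p then c else c.succAbove (ψ' u)) = c := by rw [if_pos he]
          have h2 : (if v = p then c else c.succAbove (ψ' v)) = c := by
            rw [← heq]; exact h1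
          have hvq := hkey c v h2
          rw [he, hvq] at hCadj
          exact (C x y).adj_irrefl p hCadj
        have hv : v ≠ p := by
          intro he
          have h2 : (if u = p then c else c.succAbove (ψ' u)) = c := by
            rw [heq, if_pos he]
          have huq := hkey c u h2
          rw [he, huq] at hCadj
          exact (C x y).adj_irrefl p hCadj
        rw [if_neg hu, if_neg hv] at heq
        exact ⟨⟨hCadj, hu, hv⟩, Fin.succAbove_right_injective heq⟩
    obtain ⟨φ, hφ⟩ := hdel
    have hHdicol : H.Dicolourable (j + 1) := by
      refine ⟨φ, acy_mono' (fun u v h => ?_) hφ⟩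
      refine ⟨⟨hHp.1.2 h.1, ?_⟩, h.2⟩
      rintro ⟨e1, e2⟩
      rw [e1, e2] at h
      exact hHpq h.1
    have hle : H.dichr ≤ j + 1 := Nat.sInf_le hHdicol
    omega
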